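/- The differentiation matrix D satisfies the skew-symmetry-type identity W D + D^T W = e_N e_N^T − e_1 e_1^T, where e_1 and e_N are the first and last columns of the N×N identity matrix; equivalently, D = −W^{−1} D^T W − (e_1 e_1^T)/w_1 + (e_N e_N^T)/w_N. -/

import Mathlib

open Polynomial

/-- `lagL τ i` is the `i`-th Lagrange basis polynomial (of degree `N - 1`)
for the nodes `τ 0, …, τ (N-1)`, satisfying `(lagL τ i).eval (τ j) = δᵢⱼ`. -/
noncomputable def lagL {N : ℕ} (τ : Fin N → ℝ) (i : Fin N) : ℝ[X] :=
  Lagrange.basis Finset.univ τ i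

/-- `lagLp τ` is the polynomial `L_p(x) = ∏ᵢ (x - τᵢ)`. -/
noncomputable def lagLp {N : ℕ} (τ : Fin N → ℝ) : ℝ[X] :=
  ∏ i, (X - C (τ i))

/-- The differentiation matrix `D`, with `D i j = L_j'(τ i)`. -/
noncomputable def matD {N : ℕ} (τ : Fin N → ℝ) : Matrix (Fin N) (Fin N) ℝ :=
  fun i j => (derivative (lagL τ j)).eval (τ i)

/-- The vector `D_p`, with `(D_p) i = L_p'(τ i)`. -/
noncomputable def vecDp {N : ℕ} (τ : Fin N → ℝ) : Fin N → ℝ :=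
  fun i => (derivative (lagLp τ)).eval (τ i)

/-- Columns `2, …, N+1` (in 1-based numbering) of the augmented differentiation
matrix `D̃ = [D  D_p]`: column `j` (0-based, `j < N - 1`) is column `j + 1` of `D`,
and the last column is `D_p`. -/
noncomputable def matDtil2 {N : ℕ} (τ : Fin N → ℝ) : Matrix (Fin N) (Fin N) ℝ :=
  fun i j => if h : (j : ℕ) + 1 < N then matD τ i ⟨(j : ℕ) + 1, h⟩ else vecDp τ i

/-- The quadrature rule with nodes `τ` and weights `w` integrates exactly all
polynomials of degree at most `2 * N - 3` over `[-1, 1]`. -/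
def IsQuadrature {N : ℕ} (τ : Fin N → ℝ) (w : Fin N → ℝ) : Prop :=
  ∀ p : ℝ[X], p.natDegree ≤ 2 * N - 3 →
    ∑ i, w i * p.eval (τ i) = ∫ t in (-1 : ℝ)..1, p.eval t

/-- The integration matrix `A` with rows indexed (0-based) by `i : Fin (N-1)`
corresponding to the node `τ (i+1)`: `A i j = ∫_{-1}^{τ (i+1)} L_j(t) dt`. -/
noncomputable def matA {N : ℕ} (τ : Fin N → ℝ) : Matrix (Fin (N - 1)) (Fin N) ℝ :=
  fun i j => ∫ t in (-1 : ℝ)..(τ ⟨(i : ℕ) + 1, by have := i.isLt; omega⟩), (lagL τ j).eval t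

/-- The row vector `A_p`, with `(A_p) j = (1/N) ∏_{k ≠ j} 1 / (τ j - τ k)`. -/
noncomputable def rowAp {N : ℕ} (τ : Fin N → ℝ) : Fin N → ℝ :=
  fun j => (1 / (N : ℝ)) * ∏ k ∈ Finset.univ.erase j, (τ j - τ k)⁻¹

/-- The matrix `Ã` obtained by stacking `A` on top of the row vector `A_p`. -/
noncomputable def matAtil {N : ℕ} (τ : Fin N → ℝ) : Matrix (Fin N) (Fin N) ℝ :=
  fun i j => if h : (i : ℕ) + 1 < N then matA τ ⟨(i : ℕ), by omega⟩ j else rowAp τ j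

/-- The adjoint integration matrix `A† = W⁻¹ Aᵀ W_{2:N}`, with columns indexed
(0-based) by `j : Fin (N-1)` corresponding to the node `τ (j+1)`. -/
noncomputable def matAdag {N : ℕ} (τ : Fin N → ℝ) (w : Fin N → ℝ) :
    Matrix (Fin N) (Fin (N - 1)) ℝ :=
  fun i j => (w i)⁻¹ * matA τ j i * w ⟨(j : ℕ) + 1, by have := j.isLt; omega⟩

/-- `polyM τ k` is the Lagrange basis polynomial (of degree `N - 3`) for the
interior nodes `τ 1, …, τ (N-2)`, satisfying `(polyM τ k).eval (τ m) = δₖₘ`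
for interior indices `m`. -/
noncomputable def polyM {N : ℕ} (τ : Fin N → ℝ) (k : Fin N) : ℝ[X] :=
  Lagrange.basis (Finset.univ.filter fun m : Fin N => 0 < (m : ℕ) ∧ (m : ℕ) < N - 1) τ k

/-- The polynomial `λ(x) = ∑ᵢ (A† r)ᵢ Lᵢ(x)`. -/
noncomputable def lamP {N : ℕ} (τ : Fin N → ℝ) (w : Fin N → ℝ) (r : Fin (N - 1) → ℝ) : ℝ[X] :=
  ∑ i, C ((matAdag τ w).mulVec r i) * lagL τ i

/-- The skew-symmetry-type identity `W D + Dᵀ W = e_N e_Nᵀ - e₁ e₁ᵀ`. -/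
theorem stmt15 (N : ℕ) (hN : 3 ≤ N) (τ : Fin N → ℝ) (hmono : StrictMono τ)
    (h0 : τ ⟨0, by omega⟩ = -1) (h1 : τ ⟨N - 1, by omega⟩ = 1) (w : Fin N → ℝ) (hw : ∀ i, 0 < w i) (hquad : IsQuadrature τ w) :
    Matrix.diagonal w * matD τ + (matD τ).transpose * Matrix.diagonal w =
      Matrix.single ⟨N - 1, by omega⟩ ⟨N - 1, by omega⟩ (1 : ℝ)
        - Matrix.single ⟨0, by omega⟩ ⟨0, by omega⟩ (1 : ℝ) := by
  have hinj : Set.InjOn τ (Finset.univ : Finset (Fin N)) := hmono.injective.injOn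
  have hevalL : ∀ i j : Fin N, (lagL τ i).eval (τ j) = if i = j then 1 else 0 := by
    intro i j
    by_cases h : i = j
    · subst h; simp [lagL, Lagrange.eval_basis_self hinj (Finset.mem_univ i)]
    · simp [lagL, Lagrange.eval_basis_of_ne h (Finset.mem_univ j), h]
  have hdegL : ∀ i : Fin N, (lagL τ i).natDegree = N - 1 := by
    intro i
    simpa [lagL] using Lagrange.natDegree_basis hinj (Finset.mem_univ i)
  ext i j
  set p : ℝ[X] := lagL τ i * lagL τ j with hp
  have hdeg : (derivative p).natDegree ≤ 2 * N - 3 := by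
    have h1 := p.natDegree_derivative_le
    have h2 : p.natDegree ≤ 2 * N - 2 := by
      calc p.natDegree ≤ (lagL τ i).natDegree + (lagL τ j).natDegree := natDegree_mul_le
        _ ≤ 2 * N - 2 := by rw [hdegL, hdegL]; omega
    omega
  have hquad' := hquad (derivative p) hdeg
  have hftc : ∫ t in (-1 : ℝ)..1, (derivative p).eval t = p.eval 1 - p.eval (-1) := by
    apply intervalIntegral.integral_eq_sub_of_hasDerivAt (fun x _ => p.hasDerivAt x)
    exact (Polynomial.continuous _).intervalIntegrable _ _
  have hsum : ∑ k, w k * (derivative p).eval (τ k)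
      = w j * (derivative (lagL τ i)).eval (τ j) + w i * (derivative (lagL τ j)).eval (τ i) := by
    have : ∀ k, w k * (derivative p).eval (τ k)
        = (if j = k then w k * (derivative (lagL τ i)).eval (τ k) else 0)
        + (if i = k then w k * (derivative (lagL τ j)).eval (τ k) else 0) := by
      intro k
      rw [hp, derivative_mul, eval_add, eval_mul, eval_mul, hevalL, hevalL]
      by_cases h1 : i = k <;> by_cases h2 : j = k <;>
        simp [h1, h2, eq_comm] <;> ring
    rw [Finset.sum_congr rfl (fun k _ => this k), Finset.sum_add_distrib,
      Finset.sum_ite_eq, Finset.sum_ite_eq]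
    simp
  -- eval at endpoints
  have hend : p.eval 1 - p.eval (-1)
      = (if i = (⟨N - 1, by omega⟩ : Fin N) ∧ j = (⟨N - 1, by omega⟩ : Fin N) then 1 else 0)
      - (if i = (⟨0, by omega⟩ : Fin N) ∧ j = (⟨0, by omega⟩ : Fin N) then 1 else 0) := by
    have e1 : p.eval 1 = (if i = (⟨N - 1, by omega⟩ : Fin N) then (1:ℝ) else 0)
        * (if j = (⟨N - 1, by omega⟩ : Fin N) then (1:ℝ) else 0) := by
      conv_lhs => rw [← h1, hp, eval_mul, hevalL, hevalL]
    have e2 : p.eval (-1) = (if i = (⟨0, by omega⟩ : Fin N) then (1:ℝ) else 0)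
        * (if j = (⟨0, by omega⟩ : Fin N) then (1:ℝ) else 0) := by
      conv_lhs => rw [← h0, hp, eval_mul, hevalL, hevalL]
    rw [e1, e2]
    have hne : (⟨N - 1, by omega⟩ : Fin N) ≠ (⟨0, by omega⟩ : Fin N) :=
      Fin.ne_of_val_ne (show N - 1 ≠ 0 by omega)
    by_cases hA : i = (⟨N - 1, by omega⟩ : Fin N) <;>
      by_cases hB : j = (⟨N - 1, by omega⟩ : Fin N) <;>
      by_cases hC : i = (⟨0, by omega⟩ : Fin N) <;>
      by_cases hD : j = (⟨0, by omega⟩ : Fin N) <;>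
      first
      | exact absurd (hA.symm.trans hC) hne
      | exact absurd (hB.symm.trans hD) hne
      | (simp [hA, hB, hC, hD, hne]; try (intro h; simp [h]))
  have key : w j * (derivative (lagL τ i)).eval (τ j) + w i * (derivative (lagL τ j)).eval (τ i)
      = (if i = (⟨N - 1, by omega⟩ : Fin N) ∧ j = (⟨N - 1, by omega⟩ : Fin N) then 1 else 0)
      - (if i = (⟨0, by omega⟩ : Fin N) ∧ j = (⟨0, by omega⟩ : Fin N) then 1 else 0) := by
    rw [← hsum, hquad', hftc, hend]
  have hne2 : (⟨N - 1, by omega⟩ : Fin N) ≠ (⟨0, by omega⟩ : Fin N) :=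
    Fin.ne_of_val_ne (show N - 1 ≠ 0 by omega)
  rw [Matrix.add_apply, Matrix.diagonal_mul, Matrix.mul_diagonal, Matrix.transpose_apply,
    Matrix.sub_apply]
  simp only [Matrix.single, Matrix.of_apply, matD]
  by_cases hA : i = (⟨N - 1, by omega⟩ : Fin N) <;>
    by_cases hB : j = (⟨N - 1, by omega⟩ : Fin N) <;>
    by_cases hC : i = (⟨0, by omega⟩ : Fin N) <;>
    by_cases hD : j = (⟨0, by omega⟩ : Fin N) <;>
    first
    | exact absurd (hA.symm.trans hC) hne2
    | exact absurd (hB.symm.trans hD) hne2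
    | (simp [hA, hB, hC, hD, hne2, hne2.symm, eq_comm] at key ⊢ <;> linarith)
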